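/- If u_ε two-scale converges to u ∈ L²(Ω × Y), then u_ε converges weakly in L²(Ω) to the average x ↦ ∫_Y u(x,y) dy, and (u_ε) is bounded in L²(Ω). -/

import Mathlib

open MeasureTheory Filter Topology

/-- The open unit cell `Y = (0,1)ⁿ` in `ℝⁿ`. -/
def unitCell (n : ℕ) : Set (Fin n → ℝ) := {y | ∀ i, y i ∈ Set.Ioo (0:ℝ) 1}

/-- `Y`-periodicity of a function on `ℝⁿ` (period `1` in every coordinate). -/
def YPeriodic {n : ℕ} (φ : (Fin n → ℝ) → ℝ) : Prop :=
  ∀ (y : Fin n → ℝ) (k : Fin n → ℤ), φ (y + fun i => (k i : ℝ)) = φ y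

/-- Admissible two-scale test functions, modelling `φ ∈ L²(Ω; C_per(Y))`:
`φ(x,·)` is continuous and `Y`-periodic, `φ(·,y)` is measurable, and `|φ|` is
dominated by an `L²(Ω)` function of `x`. -/
def AdmissibleTest {n : ℕ} (Ω : Set (Fin n → ℝ))
    (φ : (Fin n → ℝ) → (Fin n → ℝ) → ℝ) : Prop :=
  (∀ x, Continuous (φ x)) ∧ (∀ x, YPeriodic (φ x)) ∧
  (∀ y, AEStronglyMeasurable (fun x => φ x y) (volume.restrict Ω)) ∧
  ∃ b : (Fin n → ℝ) → ℝ, MemLp b 2 (volume.restrict Ω) ∧ ∀ x y, |φ x y| ≤ b x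

/-- Two-scale convergence (Nguetseng) of a sequence `u_j` along scales `ε j` to a
limit `u₀ ∈ L²(Ω × Y)`:
`∫_Ω u_j(x) φ(x, x/ε_j) dx → ∫_Ω ∫_Y u₀(x,y) φ(x,y) dy dx` for all admissible `φ`. -/
def TwoScaleTendsto {n : ℕ} (Ω : Set (Fin n → ℝ)) (ε : ℕ → ℝ)
    (u : ℕ → (Fin n → ℝ) → ℝ) (u₀ : (Fin n → ℝ) → (Fin n → ℝ) → ℝ) : Prop :=
  ∀ φ, AdmissibleTest Ω φ →
    Tendsto (fun j => ∫ x in Ω, u j x * φ x ((ε j)⁻¹ • x)) atTop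
      (𝓝 (∫ x in Ω, ∫ y in unitCell n, u₀ x y * φ x y))

/-- If `u_ε` two-scale converges to `u₀ ∈ L²(Ω × Y)`, then `u_ε`
converges weakly in `L²(Ω)` to the cell average `x ↦ ∫_Y u₀(x,y) dy`, and the
sequence `(u_ε)` is bounded in `L²(Ω)`. -/
theorem two_scale_implies_weak_L2 {n : ℕ}
    (Ω : Set (Fin n → ℝ)) (hΩo : IsOpen Ω) (hΩb : Bornology.IsBounded Ω)
    (ε : ℕ → ℝ) (hεpos : ∀ j, 0 < ε j) (hε0 : Tendsto ε atTop (𝓝 0))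
    (u : ℕ → (Fin n → ℝ) → ℝ) (u₀ : (Fin n → ℝ) → (Fin n → ℝ) → ℝ)
    (hmem : ∀ j, MemLp (u j) 2 (volume.restrict Ω))
    (hmem₀ : MemLp (Function.uncurry u₀) 2
      ((volume.restrict Ω).prod (volume.restrict (unitCell n))))
    (hts : TwoScaleTendsto Ω ε u u₀) :
    (∀ v : (Fin n → ℝ) → ℝ, MemLp v 2 (volume.restrict Ω) →
      Tendsto (fun j => ∫ x in Ω, u j x * v x) atTop
        (𝓝 (∫ x in Ω, (∫ y in unitCell n, u₀ x y) * v x))) ∧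
    ∃ C : ℝ, ∀ j, eLpNorm (u j) 2 (volume.restrict Ω) ≤ ENNReal.ofReal C := by

  have key : ∀ v : (Fin n → ℝ) → ℝ, MemLp v 2 (volume.restrict Ω) →
      Tendsto (fun j => ∫ x in Ω, u j x * v x) atTop
        (𝓝 (∫ x in Ω, (∫ y in unitCell n, u₀ x y) * v x)) := by
    intro v hv
    have hadm : AdmissibleTest Ω (fun x _ => v x) := by
      refine ⟨fun x => continuous_const, fun x y k => rfl,
        fun y => hv.aestronglyMeasurable, ⟨fun x => |v x|, ?_, fun x y => le_refl _⟩⟩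
      simpa [Real.norm_eq_abs] using hv.norm
    have h := hts _ hadm
    simpa [integral_mul_const] using h
  refine ⟨key, ?_⟩
  set μ := volume.restrict Ω with hμ
  let T : ℕ → Lp ℝ 2 μ →L[ℝ] ℝ := fun j => innerSL ℝ ((hmem j).toLp (u j))
  have hTval : ∀ j (v : Lp ℝ 2 μ), T j v = ∫ x in Ω, u j x * v x := by
    intro j v
    have h1 : T j v = ∫ a, ((hmem j).toLp (u j)) a * v a ∂μ := by
      show (innerSL ℝ ((hmem j).toLp (u j))) v = _
      rw [innerSL_apply_apply, L2.inner_def]; simp [RCLike.inner_apply, mul_comm]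
    rw [h1]
    exact integral_congr_ae (((hmem j).coeFn_toLp).mono fun a ha => by simp only [ha])
  have hb : ∀ v : Lp ℝ 2 μ, ∃ C, ∀ j, ‖T j v‖ ≤ C := by
    intro v
    have hv : MemLp (v : (Fin n → ℝ) → ℝ) 2 μ := Lp.memLp v
    have h := key v hv
    obtain ⟨C, hC⟩ := h.norm.bddAbove_range
    exact ⟨C, fun j => by rw [hTval j v]; exact hC ⟨j, rfl⟩⟩
  obtain ⟨C', hC'⟩ := banach_steinhaus hb
  refine ⟨C', fun j => ?_⟩
  have h1 : ‖T j‖ = ‖(hmem j).toLp (u j)‖ := innerSL_apply_norm ℝ _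
  have h2 : ‖(hmem j).toLp (u j)‖ = (eLpNorm (u j) 2 μ).toReal := by
    rw [Lp.norm_toLp]
  have h3 : (eLpNorm (u j) 2 μ).toReal ≤ C' := by
    rw [← h2, ← h1]; exact hC' j
  have h4 : eLpNorm (u j) 2 μ ≠ ⊤ := (hmem j).2.ne
  calc eLpNorm (u j) 2 μ = ENNReal.ofReal (eLpNorm (u j) 2 μ).toReal := by
        rw [ENNReal.ofReal_toReal h4]
    _ ≤ ENNReal.ofReal C' := ENNReal.ofReal_le_ofReal h3
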